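/- Let M be a finite nonempty set of identical machines, J a finite set of jobs, and p : J → ℝ with p_j > 0. Let θ : ℝ → ℝ be nondecreasing and convex on [0,∞) with θ(0) = 0, and let α ≥ 1 be a real such that for all t ∈ (0,1), d ≥ 0, and r ≥ d/(1−t): t·θ(r + d) + (1−t)·θ(d) ≤ α·( t·θ(r) + (1−t)·θ(d/(1−t)) ). Let σ : J → M be an EF1 allocation. Then for every allocation ρ : J → M, ∑_{i∈M} θ( ∑_{j ∈ σ⁻¹(i)} p_j ) ≤ α · ∑_{i∈M} θ( ∑_{j ∈ ρ⁻¹(i)} p_j ); i.e., σ is α-approximate for minimizing ∑_i θ(load_i) on identical machines. -/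

import Mathlib

open Finset

/-- Two-point convexity: moving two points closer together decreases the sum of a convex
function. -/
lemma pair_convex {θ : ℝ → ℝ} (hθ : ConvexOn ℝ (Set.Ici 0) θ)
    {a b c d : ℝ} (ha : 0 ≤ a) (hab : a ≤ b) (hbc : b ≤ c) (hcd : c ≤ d)
    (hsum : a + d = b + c) : θ b + θ c ≤ θ a + θ d := by
  rcases eq_or_lt_of_le (hab.trans (hbc.trans hcd)) with h | h
  · have hb : b = a := le_antisymm (by linarith) hab
    have hc : c = a := by linarith
    have hd : d = a := by linarith
    rw [hb, hc, hd]
  · have hda : 0 < d - a := by linarith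
    have hmema : a ∈ Set.Ici (0:ℝ) := ha
    have hmemd : d ∈ Set.Ici (0:ℝ) := by exact le_trans ha (by linarith)
    have ha1 : (0:ℝ) ≤ (d - b)/(d - a) := div_nonneg (by linarith) (by linarith)
    have ha2 : (0:ℝ) ≤ (b - a)/(d - a) := div_nonneg (by linarith) (by linarith)
    have ha3 : (d - b)/(d - a) + (b - a)/(d - a) = 1 := by
      rw [← add_div, div_eq_one_iff_eq (by linarith)]; ring
    have hb1 : (0:ℝ) ≤ (d - c)/(d - a) := div_nonneg (by linarith) (by linarith)
    have hb2 : (0:ℝ) ≤ (c - a)/(d - a) := div_nonneg (by linarith) (by linarith)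
    have hb3 : (d - c)/(d - a) + (c - a)/(d - a) = 1 := by
      rw [← add_div, div_eq_one_iff_eq (by linarith)]; ring
    have h1 : θ b ≤ ((d - b)/(d - a)) * θ a + ((b - a)/(d - a)) * θ d := by
      have hthis := hθ.2 hmema hmemd ha1 ha2 ha3
      have hpt : ((d - b)/(d - a)) • a + ((b - a)/(d - a)) • d = b := by
        rw [smul_eq_mul, smul_eq_mul]
        field_simp
        ring
      rw [hpt] at hthis
      simpa using hthis
    have h2 : θ c ≤ ((d - c)/(d - a)) * θ a + ((c - a)/(d - a)) * θ d := by
      have hthis := hθ.2 hmema hmemd hb1 hb2 hb3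
      have hpt : ((d - c)/(d - a)) • a + ((c - a)/(d - a)) • d = c := by
        rw [smul_eq_mul, smul_eq_mul]
        field_simp
        ring
      rw [hpt] at hthis
      simpa using hthis
    have h3 : (d - b)/(d - a) * θ a + (b - a)/(d - a) * θ d
        + ((d - c)/(d - a) * θ a + (c - a)/(d - a) * θ d) = θ a + θ d := by
      field_simp
      linear_combination (θ a - θ d) * hsum
    linarith [h1, h2, h3]

/-- The sum of an antitone function over any finite set of naturals is at most the sum over
an initial segment of the same size. -/
lemma antitone_sum_le_prefix (x : ℕ → ℝ) (hA : Antitone x) (W : Finset ℕ) :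
    ∑ t ∈ W, x t ≤ ∑ t ∈ Finset.range W.card, x t := by
  suffices H : ∀ c (W : Finset ℕ), W.card = c → ∑ t ∈ W, x t ≤ ∑ t ∈ Finset.range W.card, x t by
    exact H _ W rfl
  intro c
  induction c with
  | zero =>
    intro W hW
    rw [Finset.card_eq_zero] at hW
    simp [hW]
  | succ c ih =>
    intro W hW
    have hWne : W.Nonempty := by
      rw [← Finset.card_pos, hW]; omega
    set m := W.max' hWne with hm
    have hcm : c ≤ m := by
      have hsub : W ⊆ Finset.range (m + 1) := by
        intro t ht
        exact Finset.mem_range.mpr (Nat.lt_succ_of_le (Finset.le_max' W t ht))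
      have := Finset.card_le_card hsub
      rw [hW, Finset.card_range] at this
      omega
    have herase : (W.erase m).card = c := by
      rw [Finset.card_erase_of_mem (W.max'_mem hWne), hW]
      omega
    have h1 : ∑ t ∈ W.erase m, x t ≤ ∑ t ∈ Finset.range c, x t := by
      have h := ih (W.erase m) herase
      rwa [herase] at h
    have h2 : x m ≤ x c := hA hcm
    have h3 : ∑ t ∈ W, x t = x m + ∑ t ∈ W.erase m, x t :=
      (Finset.add_sum_erase W x (W.max'_mem hWne)).symm
    rw [h3, hW, Finset.sum_range_succ]
    linarith

/-- Block averaging for antitone sequences. -/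
lemma block_core (x : ℕ → ℝ) (hA : Antitone x) {k l n : ℕ} (hkl : k ≤ l) (hln : l ≤ n) :
    ((l : ℝ) - k) * (∑ t ∈ Finset.Ico l n, x t) ≤
      ((n : ℝ) - l) * (∑ t ∈ Finset.Ico k l, x t) := by
  rcases eq_or_lt_of_le hkl with h | hkl'
  · subst h
    simp
  · have hl1 : 1 ≤ l := by omega
    have hb1 := Finset.card_nsmul_le_sum (Finset.Ico k l) x (x (l - 1)) (by
      intro t ht
      rw [Finset.mem_Ico] at ht
      exact hA (by omega))
    have hb2 := Finset.sum_le_card_nsmul (Finset.Ico l n) x (x (l - 1)) (by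
      intro t ht
      rw [Finset.mem_Ico] at ht
      exact hA (by omega))
    rw [Nat.card_Ico, nsmul_eq_mul] at hb1 hb2
    have hc1 : ((l - k : ℕ) : ℝ) = (l : ℝ) - k := by
      push_cast [Nat.cast_sub hkl]; ring
    have hc2 : ((n - l : ℕ) : ℝ) = (n : ℝ) - l := by
      push_cast [Nat.cast_sub hln]; ring
    rw [hc1] at hb1
    rw [hc2] at hb2
    have h1 : (0:ℝ) ≤ (l : ℝ) - k := by
      have : (k:ℝ) ≤ l := by exact_mod_cast hkl
      linarith
    have h2 : (0:ℝ) ≤ (n : ℝ) - l := by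
      have : (l:ℝ) ≤ n := by exact_mod_cast hln
      linarith
    nlinarith [hb1, hb2]

/-- Reindexing a padded sum over an initial segment. -/
lemma pad_sum_eq {n : ℕ} (f : Fin n → ℝ) {l : ℕ} (hl : l ≤ n) :
    ∑ t ∈ Finset.range l, (if h : t < n then f ⟨t, h⟩ else 0) =
      ∑ q ∈ Finset.univ.filter (fun q : Fin n => (q : ℕ) < l), f q := by
  refine Finset.sum_bij' (fun (t : ℕ) (ht : t ∈ Finset.range l) =>
      (⟨t, lt_of_lt_of_le (Finset.mem_range.mp ht) hl⟩ : Fin n))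
    (fun (q : Fin n) _ => (q : ℕ)) ?_ ?_ ?_ ?_ ?_
  · intro t ht
    simp [Finset.mem_range.mp ht]
  · intro q hq
    rw [Finset.mem_filter] at hq
    exact Finset.mem_range.mpr hq.2
  · intro t ht
    rfl
  · intro q hq
    rfl
  · intro t ht
    rw [dif_pos (lt_of_lt_of_le (Finset.mem_range.mp ht) hl)]

lemma pad_antitone {n : ℕ} (f : Fin n → ℝ) (h0 : ∀ q, 0 ≤ f q) (hA : Antitone f) :
    Antitone (fun t => if h : t < n then f ⟨t, h⟩ else (0:ℝ)) := by
  intro a b hab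
  dsimp only
  by_cases hb : b < n
  · have ha : a < n := lt_of_le_of_lt hab hb
    rw [dif_pos ha, dif_pos hb]
    exact hA (show (⟨a, ha⟩ : Fin n) ≤ ⟨b, hb⟩ from hab)
  · rw [dif_neg hb]
    by_cases ha : a < n
    · rw [dif_pos ha]; exact h0 _
    · rw [dif_neg ha]

lemma exists_sorted_enum {M : Type*} [Fintype M] (w : M → ℝ) :
    ∃ φ : Fin (Fintype.card M) ≃ M, Antitone (w ∘ φ) := by
  let ψ := (Fintype.equivFin M).symm
  let f : Fin (Fintype.card M) → ℝ := fun q => -(w (ψ q))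
  refine ⟨(Tuple.sort f).trans ψ, ?_⟩
  intro a b hab
  have := Tuple.monotone_sort f hab
  simp only [Function.comp_apply, f] at this
  simp only [Equiv.trans_apply, Function.comp_apply]
  linarith



theorem karamata_nat {θ : ℝ → ℝ} (hconv : ConvexOn ℝ (Set.Ici 0) θ) (n : ℕ)
    (y : ℕ → ℝ) (hy0 : ∀ t, 0 ≤ y t) (hyA : Antitone y) :
    ∀ N : ℕ, ∀ x : ℕ → ℝ, (∀ t, 0 ≤ x t) →
      (∀ l, ∑ t ∈ Finset.range l, y t ≤ ∑ t ∈ Finset.range l, x t) →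
      (∑ t ∈ Finset.range n, x t = ∑ t ∈ Finset.range n, y t) →
      ((Finset.range n).filter (fun t => x t ≠ y t)).card ≤ N →
      ∑ t ∈ Finset.range n, θ (y t) ≤ ∑ t ∈ Finset.range n, θ (x t) := by
  classical
  intro N
  induction N with
  | zero =>
    intro x hx0 hpre htot hcard
    have hall : ∀ t ∈ Finset.range n, x t = y t := by
      intro t ht
      by_contra h
      have hmem : t ∈ (Finset.range n).filter (fun t => x t ≠ y t) :=
        Finset.mem_filter.mpr ⟨ht, h⟩
      have := Finset.card_pos.mpr ⟨t, hmem⟩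
      omega
    exact le_of_eq (Finset.sum_congr rfl fun t ht => by rw [hall t ht]).symm
  | succ N ih =>
    intro x hx0 hpre htot hcard
    by_cases hD : ((Finset.range n).filter (fun t => x t ≠ y t)).card = 0
    · have hall : ∀ t ∈ Finset.range n, x t = y t := by
        intro t ht
        by_contra h
        have hmem : t ∈ (Finset.range n).filter (fun t => x t ≠ y t) :=
          Finset.mem_filter.mpr ⟨ht, h⟩
        have := Finset.card_pos.mpr ⟨t, hmem⟩
        omega
      exact le_of_eq (Finset.sum_congr rfl fun t ht => by rw [hall t ht]).symm
    · have hDne : ((Finset.range n).filter (fun t => x t ≠ y t)).Nonempty := by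
        rw [← Finset.card_pos]; omega
      set Bs := (Finset.range n).filter (fun t => y t < x t) with hBsdef
      set As := (Finset.range n).filter (fun t => x t < y t) with hAsdef
      obtain ⟨t₀, ht₀⟩ := hDne
      rw [Finset.mem_filter] at ht₀
      have hBne : Bs.Nonempty := by
        by_contra hB
        rw [Finset.not_nonempty_iff_eq_empty] at hB
        have hle : ∀ t ∈ Finset.range n, x t ≤ y t := by
          intro t ht
          by_contra h
          push_neg at h
          have : t ∈ Bs := Finset.mem_filter.mpr ⟨ht, h⟩
          simp [hB] at this
        have hlt : ∑ t ∈ Finset.range n, x t < ∑ t ∈ Finset.range n, y t := by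
          apply Finset.sum_lt_sum hle
          exact ⟨t₀, ht₀.1, lt_of_le_of_ne (hle t₀ ht₀.1) ht₀.2⟩
        linarith [htot]
      have hAne : As.Nonempty := by
        by_contra hB
        rw [Finset.not_nonempty_iff_eq_empty] at hB
        have hle : ∀ t ∈ Finset.range n, y t ≤ x t := by
          intro t ht
          by_contra h
          push_neg at h
          have : t ∈ As := Finset.mem_filter.mpr ⟨ht, h⟩
          simp [hB] at this
        have hlt : ∑ t ∈ Finset.range n, y t < ∑ t ∈ Finset.range n, x t := by
          apply Finset.sum_lt_sum hle
          exact ⟨t₀, ht₀.1, lt_of_le_of_ne (hle t₀ ht₀.1) (Ne.symm ht₀.2)⟩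
        linarith [htot]
      set i := Bs.min' hBne with hidef
      set j := As.min' hAne with hjdef
      have hi : i ∈ Bs := Bs.min'_mem hBne
      have hj : j ∈ As := As.min'_mem hAne
      rw [Finset.mem_filter, Finset.mem_range] at hi hj
      have hij : i < j := by
        have h1 := hpre (j + 1)
        have h2 : 0 < ∑ t ∈ Finset.range j, (x t - y t) := by
          have h3 : (0:ℝ) ≤ ∑ t ∈ Finset.range (j+1), (x t - y t) := by
            rw [Finset.sum_sub_distrib]
            linarith
          rw [Finset.sum_range_succ] at h3
          have : x j - y j < 0 := by linarith [hj.2]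
          linarith
        obtain ⟨t, ht, htpos⟩ : ∃ t ∈ Finset.range j, 0 < x t - y t := by
          by_contra h
          push_neg at h
          have : ∑ t ∈ Finset.range j, (x t - y t) ≤ 0 :=
            Finset.sum_nonpos fun t ht => h t ht
          linarith
      -- t ∈ Bs
        have htn : t ∈ Finset.range n := by
          rw [Finset.mem_range] at ht ⊢
          omega
        have htB : t ∈ Bs := Finset.mem_filter.mpr ⟨htn, by linarith⟩
        have := Bs.min'_le t htB
        rw [Finset.mem_range] at ht
        omega
      have hyij : y j ≤ y i := hyA hij.le
      set δ := min (x i - y i) (y j - x j) with hδdef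
      have hδ1 : δ ≤ x i - y i := min_le_left _ _
      have hδ2 : δ ≤ y j - x j := min_le_right _ _
      have hδ0 : 0 < δ := lt_min (by linarith [hi.2]) (by linarith [hj.2])
      set x' := fun t => if t = i then x i - δ else if t = j then x j + δ else x t with hx'def
      have hne : i ≠ j := Nat.ne_of_lt hij
      have hx'i : x' i = x i - δ := by simp [hx'def]
      have hx'j : x' j = x j + δ := by simp [hx'def, Ne.symm hne]
      have hx'other : ∀ t, t ≠ i → t ≠ j → x' t = x t := by
        intro t h1 h2
        simp [hx'def, h1, h2]
      have hpoint : ∀ t, x' t = x t + ((if t = i then -δ else 0) + (if t = j then δ else 0)) := by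
        intro t
        by_cases h1 : t = i
        · subst h1
          simp [hne, hx'i]
          ring
        · by_cases h2 : t = j
          · subst h2
            simp [h1, hx'j]
          · simp [hx'other t h1 h2, h1, h2]
      have hdiff : ∀ s : Finset ℕ, ∑ t ∈ s, x' t =
          ∑ t ∈ s, x t + (if i ∈ s then -δ else 0) + (if j ∈ s then δ else 0) := by
        intro s
        rw [Finset.sum_congr rfl (fun t _ => hpoint t), Finset.sum_add_distrib,
          Finset.sum_add_distrib, Finset.sum_ite_eq' s i (fun _ => -δ),
          Finset.sum_ite_eq' s j (fun _ => δ)]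
        ring
      have hx'0 : ∀ t, 0 ≤ x' t := by
        intro t
        by_cases h1 : t = i
        · subst h1; rw [hx'i]; linarith [hy0 i]
        · by_cases h2 : t = j
          · subst h2; rw [hx'j]; linarith [hx0 j]
          · rw [hx'other t h1 h2]; exact hx0 t
      have hpre' : ∀ l, ∑ t ∈ Finset.range l, y t ≤ ∑ t ∈ Finset.range l, x' t := by
        intro l
        rcases le_or_gt l i with h | h
        · have : ∑ t ∈ Finset.range l, x' t = ∑ t ∈ Finset.range l, x t := by
            rw [hdiff]
            have h1 : i ∉ Finset.range l := by rw [Finset.mem_range]; omega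
            have h2 : j ∉ Finset.range l := by rw [Finset.mem_range]; omega
            simp [h1, h2]
          rw [this]; exact hpre l
        · rcases le_or_gt l j with h2 | h2
          · have hsum' : ∑ t ∈ Finset.range l, x' t = ∑ t ∈ Finset.range l, x t - δ := by
              rw [hdiff]
              have h1 : i ∈ Finset.range l := by rw [Finset.mem_range]; omega
              have h3 : j ∉ Finset.range l := by rw [Finset.mem_range]; omega
              simp [h1, h3]
              ring
            have hkey : δ ≤ ∑ t ∈ Finset.range l, (x t - y t) := by
              have hterm : ∀ t ∈ Finset.range l, 0 ≤ x t - y t := by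
                intro t htl
                rcases eq_or_ne t i with rfl | hti
                · linarith
                · by_contra hneg
                  push_neg at hneg
                  have htn : t ∈ Finset.range n := by
                    rw [Finset.mem_range] at htl ⊢
                    omega
                  have : t ∈ As := Finset.mem_filter.mpr ⟨htn, by linarith⟩
                  have := As.min'_le t this
                  rw [Finset.mem_range] at htl
                  omega
              have hione : x i - y i ≤ ∑ t ∈ Finset.range l, (x t - y t) := by
                apply Finset.single_le_sum hterm
                rw [Finset.mem_range]; omega
              linarith
            rw [hsum']
            rw [Finset.sum_sub_distrib] at hkey
            linarith
          · have : ∑ t ∈ Finset.range l, x' t = ∑ t ∈ Finset.range l, x t := by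
              rw [hdiff]
              have h1 : i ∈ Finset.range l := by rw [Finset.mem_range]; omega
              have h3 : j ∈ Finset.range l := by rw [Finset.mem_range]; omega
              simp [h1, h3]
            rw [this]; exact hpre l
      have htot' : ∑ t ∈ Finset.range n, x' t = ∑ t ∈ Finset.range n, y t := by
        rw [hdiff]
        have h1 : i ∈ Finset.range n := Finset.mem_range.mpr hi.1
        have h3 : j ∈ Finset.range n := Finset.mem_range.mpr hj.1
        simp [h1, h3]
        linarith [htot]
      -- card decrease
      have hcard' : ((Finset.range n).filter (fun t => x' t ≠ y t)).card ≤ N := by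
        have hex : (x' i = y i ∧ i ∈ (Finset.range n).filter (fun t => x t ≠ y t)) ∨
            (x' j = y j ∧ j ∈ (Finset.range n).filter (fun t => x t ≠ y t)) := by
          rcases le_total (x i - y i) (y j - x j) with hc | hc
          · left
            constructor
            · rw [hx'i, hδdef, min_eq_left hc]; ring
            · exact Finset.mem_filter.mpr ⟨Finset.mem_range.mpr hi.1, by
                intro hxy; linarith [hi.2]⟩
          · right
            constructor
            · rw [hx'j, hδdef, min_eq_right hc]; ring
            · exact Finset.mem_filter.mpr ⟨Finset.mem_range.mpr hj.1, by
                intro hxy; linarith [hj.2]⟩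
        obtain ⟨heq, hmem⟩ | ⟨heq, hmem⟩ := hex
        · have hsub : (Finset.range n).filter (fun t => x' t ≠ y t) ⊆
              ((Finset.range n).filter (fun t => x t ≠ y t)).erase i := by
            intro t ht
            rw [Finset.mem_filter] at ht
            rw [Finset.mem_erase, Finset.mem_filter]
            have hti : t ≠ i := by
              intro h; subst h; exact ht.2 heq
            refine ⟨hti, ht.1, ?_⟩
            rcases eq_or_ne t j with rfl | htj
            · intro h; linarith [hj.2]
            · rw [← hx'other t hti htj]; exact ht.2
          have := Finset.card_le_card hsub
          rw [Finset.card_erase_of_mem hmem] at this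
          omega
        · have hsub : (Finset.range n).filter (fun t => x' t ≠ y t) ⊆
              ((Finset.range n).filter (fun t => x t ≠ y t)).erase j := by
            intro t ht
            rw [Finset.mem_filter] at ht
            rw [Finset.mem_erase, Finset.mem_filter]
            have htj : t ≠ j := by
              intro h; subst h; exact ht.2 heq
            refine ⟨htj, ht.1, ?_⟩
            rcases eq_or_ne t i with rfl | hti
            · intro h; linarith [hi.2]
            · rw [← hx'other t hti htj]; exact ht.2
          have := Finset.card_le_card hsub
          rw [Finset.card_erase_of_mem hmem] at this
          omega
      -- theta step
      have hpair : θ (x j + δ) + θ (x i - δ) ≤ θ (x j) + θ (x i) := by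
        have := pair_convex hconv (a := x j) (b := x j + δ) (c := x i - δ) (d := x i)
          (hx0 j) (by linarith) (by linarith) (by linarith) (by ring)
        linarith
      have hθsum : ∑ t ∈ Finset.range n, θ (x' t) ≤ ∑ t ∈ Finset.range n, θ (x t) := by
        have hpt : ∀ t, θ (x' t) = θ (x t) +
            ((if t = i then θ (x i - δ) - θ (x i) else 0) +
             (if t = j then θ (x j + δ) - θ (x j) else 0)) := by
          intro t
          by_cases h1 : t = i
          · subst h1
            simp [hne, hx'i]
          · by_cases h2 : t = j
            · subst h2
              simp [h1, hx'j]
            · simp [hx'other t h1 h2, h1, h2]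
        rw [Finset.sum_congr rfl (fun t _ => hpt t), Finset.sum_add_distrib,
          Finset.sum_add_distrib, Finset.sum_ite_eq' _ i, Finset.sum_ite_eq' _ j]
        have h1 : i ∈ Finset.range n := Finset.mem_range.mpr hi.1
        have h3 : j ∈ Finset.range n := Finset.mem_range.mpr hj.1
        rw [if_pos h1, if_pos h3]
        linarith
      exact le_trans (ih x' hx'0 hpre' htot' hcard') hθsum

lemma card_filter_val_lt {n l : ℕ} (hl : l ≤ n) :
    (Finset.univ.filter (fun q : Fin n => (q : ℕ) < l)).card = l := by
  have h1 : ∑ t ∈ Finset.range l, (if h : t < n then (1:ℝ) else 0) = l := by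
    rw [Finset.sum_congr rfl
      (fun t ht => dif_pos (lt_of_lt_of_le (Finset.mem_range.mp ht) hl))]
    simp
  rw [pad_sum_eq (fun _ : Fin n => (1:ℝ)) hl] at h1
  rw [Finset.sum_const, nsmul_eq_mul, mul_one] at h1
  exact_mod_cast h1

/-- Key majorization lemma: if `V` dominates level `z` and any collection of machines with
`V` above `z` can be "covered" by at most as many machines of `O` carrying at least as much,
and totals agree, then the convex aggregate of `V` is at most that of `O`. -/
theorem sum_theta_V_le {M : Type*} [Fintype M] [DecidableEq M]
    (θ : ℝ → ℝ) (hconv : ConvexOn ℝ (Set.Ici 0) θ)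
    (V O : M → ℝ) (hO0 : ∀ i, 0 ≤ O i) (z : ℝ) (hz0 : 0 ≤ z)
    (hVz : ∀ i, z ≤ V i) (hsum : ∑ i, V i = ∑ i, O i)
    (hcert : ∀ T : Finset M, (∀ i ∈ T, z < V i) →
      ∃ U : Finset M, U.card ≤ T.card ∧ ∑ i ∈ T, V i ≤ ∑ ℓ ∈ U, O ℓ) :
    ∑ i, θ (V i) ≤ ∑ i, θ (O i) := by
  classical
  set n := Fintype.card M with hndef
  obtain ⟨φV, hφV⟩ := exists_sorted_enum V
  obtain ⟨φO, hφO⟩ := exists_sorted_enum O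
  have hV0 : ∀ i, 0 ≤ V i := fun i => le_trans hz0 (hVz i)
  set y : ℕ → ℝ := fun t => if h : t < n then V (φV ⟨t, h⟩) else 0 with hydef
  set x : ℕ → ℝ := fun t => if h : t < n then O (φO ⟨t, h⟩) else 0 with hxdef
  have hyval : ∀ (t : ℕ) (h : t < n), y t = V (φV ⟨t, h⟩) := fun t h => dif_pos h
  have hxval : ∀ (t : ℕ) (h : t < n), x t = O (φO ⟨t, h⟩) := fun t h => dif_pos h
  have hy0 : ∀ t, 0 ≤ y t := by
    intro t
    by_cases h : t < n
    · rw [hyval t h]; exact hV0 _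
    · rw [hydef]; simp only [dif_neg h]; exact le_refl 0
  have hx0 : ∀ t, 0 ≤ x t := by
    intro t
    by_cases h : t < n
    · rw [hxval t h]; exact hO0 _
    · rw [hxdef]; simp only [dif_neg h]; exact le_refl 0
  have hyA : Antitone y := pad_antitone (fun q => V (φV q)) (fun q => hV0 _) hφV
  have hxA : Antitone x := pad_antitone (fun q => O (φO q)) (fun q => hO0 _) hφO
  -- transport of sums
  have htrans : ∀ (f : M → ℝ) (φ : Fin n ≃ M),
      ∑ t ∈ Finset.range n, (if h : t < n then f (φ ⟨t, h⟩) else 0) = ∑ i, f i := by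
    intro f φ
    rw [pad_sum_eq (fun q => f (φ q)) (le_refl n),
      Finset.filter_true_of_mem (fun q _ => q.isLt)]
    exact Equiv.sum_comp φ f
  have hyTot : ∑ t ∈ Finset.range n, y t = ∑ i, V i := htrans V φV
  have hxTot : ∑ t ∈ Finset.range n, x t = ∑ i, O i := htrans O φO
  -- subset sums of O are below prefixes of x
  have hUx : ∀ U : Finset M, ∑ ℓ ∈ U, O ℓ ≤ ∑ t ∈ Finset.range U.card, x t := by
    intro U
    have hinj : Function.Injective (fun ℓ : M => ((φO.symm ℓ : Fin n) : ℕ)) := by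
      intro a b h
      have := Fin.val_injective h
      exact φO.symm.injective this
    have himg : ∑ t ∈ U.image (fun ℓ => ((φO.symm ℓ : Fin n) : ℕ)), x t = ∑ ℓ ∈ U, O ℓ := by
      rw [Finset.sum_image (fun a _ b _ h => hinj h)]
      apply Finset.sum_congr rfl
      intro ℓ _
      rw [hxval _ (φO.symm ℓ).isLt]
      congr 1
      rw [Fin.eta]
      exact φO.apply_symm_apply ℓ
    have hcard : (U.image (fun ℓ => ((φO.symm ℓ : Fin n) : ℕ))).card = U.card :=
      Finset.card_image_of_injective U hinj
    calc ∑ ℓ ∈ U, O ℓ = ∑ t ∈ U.image (fun ℓ => ((φO.symm ℓ : Fin n) : ℕ)), x t := himg.symm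
      _ ≤ ∑ t ∈ Finset.range (U.image (fun ℓ => ((φO.symm ℓ : Fin n) : ℕ))).card, x t :=
          antitone_sum_le_prefix x hxA _
      _ = ∑ t ∈ Finset.range U.card, x t := by rw [hcard]
  set S := Finset.univ.filter (fun i => z < V i) with hSdef
  set k := S.card with hkdef
  have hkn : k ≤ n := by
    calc k ≤ Finset.univ.card := Finset.card_filter_le _ _
      _ = n := by rw [Finset.card_univ]
  have hVnotS : ∀ i, i ∉ S → V i = z := by
    intro i hi
    rw [hSdef] at hi
    simp only [Finset.mem_filter, Finset.mem_univ, true_and, not_lt] at hi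
    exact le_antisymm hi (hVz i)
  have hyk1 : ∀ t, t < k → z < y t := by
    intro t htk
    have htn : t < n := lt_of_lt_of_le htk hkn
    by_contra h
    push_neg at h
    have hsub : S.image (fun i => ((φV.symm i : Fin n) : ℕ)) ⊆ Finset.range t := by
      intro s hs
      obtain ⟨i, hiS, rfl⟩ := Finset.mem_image.mp hs
      rw [Finset.mem_range]
      by_contra hge
      push_neg at hge
      have hmono := hyA hge
      have hveq : y ((φV.symm i : Fin n) : ℕ) = V i := by
        rw [hyval _ (φV.symm i).isLt, Fin.eta]
        rw [φV.apply_symm_apply]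
      have hzi : z < V i := by
        rw [hSdef] at hiS
        exact (Finset.mem_filter.mp hiS).2
      rw [hveq] at hmono
      linarith
    have hcard := Finset.card_le_card hsub
    rw [Finset.card_image_of_injective S (fun a b h =>
      φV.symm.injective (Fin.val_injective h)), Finset.card_range] at hcard
    omega
  have hyk2 : ∀ t, k ≤ t → t < n → y t = z := by
    intro t hkt htn
    refine le_antisymm ?_ (by rw [hyval t htn]; exact hVz _)
    by_contra h
    push_neg at h
    have hsub : (Finset.univ.filter (fun q : Fin n => (q : ℕ) < t + 1)).image φV ⊆ S := by
      intro i hi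
      obtain ⟨q, hq, rfl⟩ := Finset.mem_image.mp hi
      rw [Finset.mem_filter] at hq
      have hqt : (q : ℕ) ≤ t := by omega
      have hmono := hyA hqt
      rw [hSdef, Finset.mem_filter]
      refine ⟨Finset.mem_univ _, ?_⟩
      have hveq : y (q : ℕ) = V (φV q) := by rw [hyval _ q.isLt, Fin.eta]
      rw [← hveq]
      linarith
    have hcard := Finset.card_le_card hsub
    rw [Finset.card_image_of_injective _ φV.injective,
      card_filter_val_lt (by omega)] at hcard
    omega
  -- prefix domination
  have hprefix : ∀ l, ∑ t ∈ Finset.range l, y t ≤ ∑ t ∈ Finset.range l, x t := by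
    have hylow : ∀ l, l ≤ k →
        ∑ t ∈ Finset.range l, y t =
          ∑ i ∈ (Finset.univ.filter (fun q : Fin n => (q : ℕ) < l)).image φV, V i := by
      intro l hlk
      rw [Finset.sum_image (fun a _ b _ h => φV.injective h)]
      exact pad_sum_eq (fun q => V (φV q)) (le_trans hlk hkn)
    have hTmem : ∀ l, l ≤ k → ∀ i ∈ (Finset.univ.filter
        (fun q : Fin n => (q : ℕ) < l)).image φV, z < V i := by
      intro l hlk i hi
      obtain ⟨q, hq, rfl⟩ := Finset.mem_image.mp hi
      rw [Finset.mem_filter] at hq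
      have := hyk1 (q : ℕ) (lt_of_lt_of_le hq.2 hlk)
      rwa [hyval _ q.isLt, Fin.eta] at this
    have hTcard : ∀ l, l ≤ k →
        ((Finset.univ.filter (fun q : Fin n => (q : ℕ) < l)).image φV).card = l := by
      intro l hlk
      rw [Finset.card_image_of_injective _ φV.injective, card_filter_val_lt (le_trans hlk hkn)]
    have hprefix_low : ∀ l, l ≤ k →
        ∑ t ∈ Finset.range l, y t ≤ ∑ t ∈ Finset.range l, x t := by
      intro l hlk
      obtain ⟨U, hUcard, hUsum⟩ := hcert _ (hTmem l hlk)
      calc ∑ t ∈ Finset.range l, y t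
          = ∑ i ∈ (Finset.univ.filter (fun q : Fin n => (q : ℕ) < l)).image φV, V i :=
            hylow l hlk
        _ ≤ ∑ ℓ ∈ U, O ℓ := hUsum
        _ ≤ ∑ t ∈ Finset.range U.card, x t := hUx U
        _ ≤ ∑ t ∈ Finset.range l, x t := by
            apply Finset.sum_le_sum_of_subset_of_nonneg
            · apply Finset.range_subset_range.mpr
              rw [← hTcard l hlk]
              exact hUcard
            · exact fun t _ _ => hx0 t
    intro l
    rcases le_or_gt l n with hln | hln
    · rcases le_or_gt l k with hlk | hkl
      · exact hprefix_low l hlk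
      · -- k < l ≤ n
        have hTkS : (Finset.univ.filter (fun q : Fin n => (q : ℕ) < k)).image φV = S := by
          apply Finset.eq_of_subset_of_card_le
          · intro i hi
            rw [hSdef, Finset.mem_filter]
            exact ⟨Finset.mem_univ _, hTmem k (le_refl k) i hi⟩
          · rw [hTcard k (le_refl k)]
        have hyE : ∑ t ∈ Finset.range k, y t = ∑ i ∈ S, V i := by
          rw [hylow k (le_refl k), hTkS]
        have hIco : ∑ t ∈ Finset.Ico k l, y t = ((l : ℝ) - k) * z := by
          have hz' : ∀ t ∈ Finset.Ico k l, y t = z := by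
            intro t ht
            rw [Finset.mem_Ico] at ht
            exact hyk2 t ht.1 (lt_of_lt_of_le ht.2 hln)
          rw [Finset.sum_congr rfl hz', Finset.sum_const, Nat.card_Ico, nsmul_eq_mul]
          congr 1
          push_cast [Nat.cast_sub hkl.le]
          ring
        have hyl : ∑ t ∈ Finset.range l, y t = ∑ i ∈ S, V i + ((l : ℝ) - k) * z := by
          rw [← Finset.sum_range_add_sum_Ico y hkl.le, hyE, hIco]
        have hXsplit : ∑ t ∈ Finset.range l, x t =
            ∑ t ∈ Finset.range k, x t + ∑ t ∈ Finset.Ico k l, x t :=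
          (Finset.sum_range_add_sum_Ico x hkl.le).symm
        have hXsplit2 : ∑ t ∈ Finset.range n, x t =
            ∑ t ∈ Finset.range l, x t + ∑ t ∈ Finset.Ico l n, x t :=
          (Finset.sum_range_add_sum_Ico x hln).symm
        have hblock := block_core x hxA hkl.le hln
        have hXk : ∑ i ∈ S, V i ≤ ∑ t ∈ Finset.range k, x t := by
          obtain ⟨U, hUc, hUs⟩ := hcert S (fun i hi => by
            rw [hSdef] at hi
            exact (Finset.mem_filter.mp hi).2)
          refine hUs.trans ((hUx U).trans ?_)
          apply Finset.sum_le_sum_of_subset_of_nonneg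
          · exact Finset.range_subset_range.mpr hUc
          · exact fun t _ _ => hx0 t
        have hPtotAll : ∑ i ∈ S, V i + ((n : ℝ) - k) * z =
            ∑ t ∈ Finset.range k, x t + ∑ t ∈ Finset.Ico k l, x t
              + ∑ t ∈ Finset.Ico l n, x t := by
          have h1 : ∑ i, V i = ∑ i ∈ S, V i + ((n : ℝ) - k) * z := by
            rw [← Finset.sum_filter_add_sum_filter_not Finset.univ (fun i => z < V i) V]
            congr 1
            rw [Finset.sum_congr rfl (fun i hi => hVnotS i (by
              rw [Finset.mem_filter] at hi
              rw [hSdef, Finset.mem_filter]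
              intro hc
              exact hi.2 hc.2))]
            rw [Finset.sum_const, nsmul_eq_mul]
            congr 1
            have hcards : k + (Finset.univ.filter (fun i => ¬ z < V i)).card = n := by
              rw [hkdef, hSdef, hndef, ← Finset.card_univ]
              exact Finset.card_filter_add_card_filter_not _
            have hcc : (Finset.univ.filter (fun i => ¬ z < V i)).card = n - k := by omega
            rw [hcc]
            push_cast [Nat.cast_sub hkn]
            ring
          rw [← h1, hsum, ← hxTot, hXsplit2, hXsplit]
        have hnl0 : (0:ℝ) ≤ (n : ℝ) - l := by
          have : (l:ℝ) ≤ n := by exact_mod_cast hln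
          linarith
        have hnk0 : (0:ℝ) < (n : ℝ) - k := by
          have h1 : (k:ℝ) < l := by exact_mod_cast hkl
          have h2 : (l:ℝ) ≤ n := by exact_mod_cast hln
          linarith
        rw [hyl, hXsplit]
        set E := ∑ i ∈ S, V i
        set Xk := ∑ t ∈ Finset.range k, x t
        set A := ∑ t ∈ Finset.Ico k l, x t
        set B := ∑ t ∈ Finset.Ico l n, x t
        have key : ((n:ℝ) - k) * ((Xk + A) - (E + ((l:ℝ) - k) * z)) =
            ((n:ℝ) - l) * (Xk - E) + (((n:ℝ) - l) * A - ((l:ℝ) - k) * B) := by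
          linear_combination (-(l:ℝ) + k) * hPtotAll
        have hge : (0:ℝ) ≤ ((n:ℝ) - k) * ((Xk + A) - (E + ((l:ℝ) - k) * z)) := by
          rw [key]
          have t1 : (0:ℝ) ≤ ((n:ℝ) - l) * (Xk - E) :=
            mul_nonneg hnl0 (by linarith)
          have t2 : (0:ℝ) ≤ ((n:ℝ) - l) * A - ((l:ℝ) - k) * B := by linarith
          linarith
        nlinarith [hge, hnk0]
    · -- l > n
      have h1 : ∑ t ∈ Finset.range n, y t = ∑ t ∈ Finset.range l, y t := by
        apply Finset.sum_subset (Finset.range_subset_range.mpr hln.le)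
        intro t _ htn
        rw [Finset.mem_range, not_lt] at htn
        rw [hydef]
        exact dif_neg (by omega)
      have h2 : ∑ t ∈ Finset.range n, x t = ∑ t ∈ Finset.range l, x t := by
        apply Finset.sum_subset (Finset.range_subset_range.mpr hln.le)
        intro t _ htn
        rw [Finset.mem_range, not_lt] at htn
        rw [hxdef]
        exact dif_neg (by omega)
      rw [← h1, ← h2, hyTot, hxTot, hsum]
  have htotx : ∑ t ∈ Finset.range n, x t = ∑ t ∈ Finset.range n, y t := by
    rw [hxTot, hyTot, hsum]
  have hkar := karamata_nat hconv n y hy0 hyA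
    ((Finset.range n).filter (fun t => x t ≠ y t)).card x hx0 hprefix htotx (le_refl _)
  have hyθ : ∑ t ∈ Finset.range n, θ (y t) = ∑ i, θ (V i) := by
    have h1 : ∀ t ∈ Finset.range n, θ (y t) =
        (if h : t < n then θ (V (φV ⟨t, h⟩)) else 0) := by
      intro t ht
      have h := Finset.mem_range.mp ht
      rw [hyval t h, dif_pos h]
    rw [Finset.sum_congr rfl h1]
    exact htrans (fun i => θ (V i)) φV
  have hxθ : ∑ t ∈ Finset.range n, θ (x t) = ∑ i, θ (O i) := by
    have h1 : ∀ t ∈ Finset.range n, θ (x t) =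
        (if h : t < n then θ (O (φO ⟨t, h⟩)) else 0) := by
      intro t ht
      have h := Finset.mem_range.mp ht
      rw [hxval t h, dif_pos h]
    rw [Finset.sum_congr rfl h1]
    exact htrans (fun i => θ (O i)) φO
  rw [← hyθ, ← hxθ]
  exact hkar


/-- An allocation `σ : J → M` of jobs to machines is EF1 (interpreting jobs as goods) for
job sizes `p : J → ℝ`: for all machines `i, i'` with `σ⁻¹(i')` nonempty,
`∑_{j ∈ σ⁻¹(i)} p_j ≥ ∑_{j ∈ σ⁻¹(i')} p_j − max_{j ∈ σ⁻¹(i')} p_j`. -/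
def IsEF1Sched {J M : Type*} [Fintype J] [DecidableEq M] (p : J → ℝ) (σ : J → M) : Prop :=
  ∀ i i' : M, ∀ hne : (Finset.univ.filter (fun j => σ j = i')).Nonempty,
    (∑ j ∈ Finset.univ.filter (fun j => σ j = i'), p j)
        - (Finset.univ.filter (fun j => σ j = i')).sup' hne p
      ≤ ∑ j ∈ Finset.univ.filter (fun j => σ j = i), p j

/-- on identical machines, if `θ` is nondecreasing and convex on `[0,∞)` with
`θ(0) = 0` and `α ≥ 1` satisfies
`t·θ(r+d) + (1−t)·θ(d) ≤ α·(t·θ(r) + (1−t)·θ(d/(1−t)))` for all `t ∈ (0,1)`, `d ≥ 0`,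
`r ≥ d/(1−t)`, then any EF1 allocation `σ` is `α`-approximate for minimizing
`∑_i θ(load_i)`. -/
theorem stmt14 {M J : Type*} [Fintype M] [Fintype J] [Nonempty M] [DecidableEq M]
    (p : J → ℝ) (hp : ∀ j, 0 < p j)
    (θ : ℝ → ℝ)
    (hmono : MonotoneOn θ (Set.Ici 0)) (hconv : ConvexOn ℝ (Set.Ici 0) θ) (hθ0 : θ 0 = 0)
    (α : ℝ) (hα : 1 ≤ α)
    (hαineq : ∀ t ∈ Set.Ioo (0 : ℝ) 1, ∀ d : ℝ, 0 ≤ d → ∀ r : ℝ, d / (1 - t) ≤ r →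
      t * θ (r + d) + (1 - t) * θ d ≤ α * (t * θ r + (1 - t) * θ (d / (1 - t))))
    (σ : J → M) (hσ : IsEF1Sched p σ)
    (ρ : J → M) :
    ∑ i, θ (∑ j ∈ Finset.univ.filter (fun j => σ j = i), p j)
      ≤ α * ∑ i, θ (∑ j ∈ Finset.univ.filter (fun j => ρ j = i), p j) := by
  classical
  set L : M → ℝ := fun i => ∑ j ∈ Finset.univ.filter (fun j => σ j = i), p j with hLdef
  set O : M → ℝ := fun i => ∑ j ∈ Finset.univ.filter (fun j => ρ j = i), p j with hOdef
  show ∑ i, θ (L i) ≤ α * ∑ i, θ (O i)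
  have hp0 : ∀ j, 0 ≤ p j := fun j => (hp j).le
  have hL0 : ∀ i, 0 ≤ L i := fun i => Finset.sum_nonneg fun j _ => hp0 j
  have hO0 : ∀ i, 0 ≤ O i := fun i => Finset.sum_nonneg fun j _ => hp0 j
  set P : ℝ := ∑ j, p j with hPdef
  have hPL : ∑ i, L i = P := Finset.sum_fiberwise Finset.univ σ p
  have hPO : ∑ i, O i = P := Finset.sum_fiberwise Finset.univ ρ p
  have hθO0 : 0 ≤ ∑ i, θ (O i) := by
    apply Finset.sum_nonneg
    intro i _
    have := hmono (Set.mem_Ici.mpr (le_refl (0:ℝ))) (Set.mem_Ici.mpr (hO0 i)) (hO0 i)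
    rw [hθ0] at this
    exact this
  have hα0 : (0:ℝ) ≤ α := le_trans zero_le_one hα
  obtain ⟨i₀, -, hi₀⟩ := Finset.exists_min_image Finset.univ L
    ⟨Classical.arbitrary M, Finset.mem_univ _⟩
  set d := L i₀ with hddef
  have hdle : ∀ i, d ≤ L i := fun i => hi₀ i (Finset.mem_univ i)
  have hd0 : 0 ≤ d := hL0 i₀
  set e : M → ℝ := fun i => L i - d with hedef
  have he0 : ∀ i, 0 ≤ e i := fun i => sub_nonneg.mpr (hdle i)
  have hLe : ∀ i, L i = d + e i := fun i => by rw [hedef]; ring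
  -- big-job certificates from EF1
  have hbig : ∀ i : M, 0 < e i → ∃ j : J, σ j = i ∧ e i ≤ p j := by
    intro i hei
    have hne : (Finset.univ.filter (fun j => σ j = i)).Nonempty := by
      by_contra h
      rw [Finset.not_nonempty_iff_eq_empty] at h
      have hLi : L i = 0 := by
        have : L i = ∑ j ∈ Finset.univ.filter (fun j => σ j = i), p j := rfl
        rw [this, h, Finset.sum_empty]
      have : e i = L i - d := rfl
      rw [this, hLi] at hei
      linarith
    obtain ⟨j, hjmem, hjsup⟩ := Finset.exists_mem_eq_sup' hne p
    have hEF : L i - (Finset.univ.filter (fun j => σ j = i)).sup' hne p ≤ L i₀ :=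
      hσ i₀ i hne
    refine ⟨j, (Finset.mem_filter.mp hjmem).2, ?_⟩
    have he' : e i = L i - d := rfl
    have hEF' : L i - (Finset.univ.filter (fun j => σ j = i)).sup' hne p ≤ d := by
      rw [hddef]; exact hEF
    rw [he', ← hjsup]
    linarith
  have hcert0 : ∀ T : Finset M, (∀ i ∈ T, 0 < e i) →
      ∃ U : Finset M, U.card ≤ T.card ∧ ∑ i ∈ T, e i ≤ ∑ ℓ ∈ U, O ℓ := by
    intro T hT
    rcases T.eq_empty_or_nonempty with rfl | hTne
    · exact ⟨∅, le_refl _, by simp⟩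
    obtain ⟨i₁, hi₁⟩ := hTne
    obtain ⟨j₁, -, -⟩ := hbig i₁ (hT i₁ hi₁)
    set jb : M → J := fun i => if h : 0 < e i then (hbig i h).choose else j₁ with hjbdef
    have hjb : ∀ i ∈ T, σ (jb i) = i ∧ e i ≤ p (jb i) := by
      intro i hi
      have h := hT i hi
      have : jb i = (hbig i h).choose := by rw [hjbdef]; exact dif_pos h
      rw [this]
      exact (hbig i h).choose_spec
    have hinj : ∀ a ∈ T, ∀ b ∈ T, jb a = jb b → a = b := by
      intro a ha b hb h
      have h1 := (hjb a ha).1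
      have h2 := (hjb b hb).1
      rw [← h1, ← h2, h]
    set U := (T.image jb).image ρ with hUdef
    refine ⟨U, ?_, ?_⟩
    · calc U.card ≤ (T.image jb).card := Finset.card_image_le
        _ ≤ T.card := Finset.card_image_le
    · have h1 : ∑ i ∈ T, e i ≤ ∑ i ∈ T, p (jb i) :=
        Finset.sum_le_sum fun i hi => (hjb i hi).2
      have h2 : ∑ i ∈ T, p (jb i) = ∑ j ∈ T.image jb, p j :=
        (Finset.sum_image hinj).symm
      have h3 : ∑ j ∈ T.image jb, p j ≤
          ∑ j ∈ Finset.univ.filter (fun j => ρ j ∈ U), p j := by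
        apply Finset.sum_le_sum_of_subset_of_nonneg
        · intro j hj
          exact Finset.mem_filter.mpr ⟨Finset.mem_univ _, Finset.mem_image_of_mem ρ hj⟩
        · exact fun j _ _ => hp0 j
      have h4 : ∑ ℓ ∈ U, O ℓ = ∑ j ∈ Finset.univ.filter (fun j => ρ j ∈ U), p j :=
        Finset.sum_fiberwise_eq_sum_filter Finset.univ U ρ p
      linarith
  by_cases hdz : d = 0
  · -- min load is zero
    have hkey : ∑ i, θ (L i) ≤ ∑ i, θ (O i) := by
      apply sum_theta_V_le θ hconv L O hO0 0 le_rfl hL0 (by rw [hPL, hPO])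
      intro T hT
      have hTe : ∀ i ∈ T, 0 < e i := by
        intro i hi
        have : e i = L i - d := rfl
        rw [this, hdz, sub_zero]
        exact hT i hi
      obtain ⟨U, hUc, hUs⟩ := hcert0 T hTe
      refine ⟨U, hUc, ?_⟩
      have : ∑ i ∈ T, L i = ∑ i ∈ T, e i := by
        apply Finset.sum_congr rfl
        intro i _
        have : e i = L i - d := rfl
        rw [this, hdz, sub_zero]
      rw [this]
      exact hUs
    calc ∑ i, θ (L i) ≤ ∑ i, θ (O i) := hkey
      _ ≤ α * ∑ i, θ (O i) := le_mul_of_one_le_left hθO0 hα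
  · have hdpos : 0 < d := lt_of_le_of_ne hd0 (Ne.symm hdz)
    -- IVT to find the water level z
    have hdP : d ≤ P := by
      have h := Finset.single_le_sum (f := L) (fun i _ => hL0 i) (Finset.mem_univ i₀)
      rw [hPL] at h
      exact h
    have hcont : ContinuousOn (fun w => ∑ i, max (e i) w) (Set.Icc d P) := by
      apply Continuous.continuousOn
      apply continuous_finset_sum
      intro i _
      exact continuous_const.max continuous_id
    have hfd : (∑ i, max (e i) d) ≤ P := by
      calc ∑ i, max (e i) d ≤ ∑ i, (e i + d) := by
            apply Finset.sum_le_sum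
            intro i _
            exact max_le (by linarith [he0 i, hd0]) (by linarith [he0 i])
        _ = ∑ i, L i := by
            apply Finset.sum_congr rfl
            intro i _
            rw [hLe i]; ring
        _ = P := hPL
    have hfP : P ≤ ∑ i, max (e i) P := by
      have h := Finset.single_le_sum (f := fun i => max (e i) P)
        (fun i _ => le_trans (he0 i) (le_max_left _ _)) (Finset.mem_univ i₀)
      calc P ≤ max (e i₀) P := le_max_right _ _
        _ ≤ ∑ i, max (e i) P := h
    obtain ⟨z, hzmem, hz⟩ := intermediate_value_Icc hdP hcont ⟨hfd, hfP⟩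
    have hzd : d ≤ z := hzmem.1
    have hz0 : 0 < z := lt_of_lt_of_le hdpos hzd
    set V : M → ℝ := fun i => max (e i) z with hVdef
    have hPV : ∑ i, V i = P := hz
    have hVz : ∀ i, z ≤ V i := fun i => le_max_right _ _
    -- Karamata part
    have hVkey : ∑ i, θ (V i) ≤ ∑ i, θ (O i) := by
      apply sum_theta_V_le θ hconv V O hO0 z hz0.le hVz (by rw [hPV, hPO])
      intro T hT
      have hTze : ∀ i ∈ T, z < e i := by
        intro i hi
        have h := hT i hi
        by_contra hc
        push_neg at hc
        have : V i = z := by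
          have : V i = max (e i) z := rfl
          rw [this, max_eq_right hc]
        rw [this] at h
        exact lt_irrefl z h
      have hTe : ∀ i ∈ T, 0 < e i := fun i hi => lt_of_le_of_lt hz0.le (hTze i hi)
      obtain ⟨U, hUc, hUs⟩ := hcert0 T hTe
      refine ⟨U, hUc, ?_⟩
      have hVe : ∑ i ∈ T, V i = ∑ i ∈ T, e i := by
        apply Finset.sum_congr rfl
        intro i hi
        have : V i = max (e i) z := rfl
        rw [this, max_eq_left (le_of_lt (hTze i hi))]
      rw [hVe]
      exact hUs
    -- the heavy set and its fractional companion
    set S := Finset.univ.filter (fun i => z < e i) with hSdef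
    set k := S.card with hkdef
    set Sc := Finset.univ.filter (fun i => ¬ z < e i) with hScdef
    set K : ℝ := (∑ i ∈ Sc, e i) / z with hKdef
    have hK0 : 0 ≤ K := div_nonneg (Finset.sum_nonneg fun i _ => he0 i) hz0.le
    set nR : ℝ := (Fintype.card M : ℝ) with hnRdef
    have hkn : k ≤ Fintype.card M := by
      calc k ≤ Finset.univ.card := Finset.card_filter_le _ _
        _ = Fintype.card M := Finset.card_univ
    have hScR : ((Sc.card : ℕ) : ℝ) = nR - k := by
      have hcards : k + Sc.card = Fintype.card M := by
        rw [hkdef, hSdef, hScdef, ← Finset.card_univ]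
        exact Finset.card_filter_add_card_filter_not _
      have : Sc.card = Fintype.card M - k := by omega
      rw [this, hnRdef]
      push_cast [Nat.cast_sub hkn]
      ring
    have hKz : ∑ i ∈ Sc, e i = K * z := by
      rw [hKdef]
      field_simp
    have hEz : (∑ i ∈ S, e i) + (nR - k) * z = P := by
      have h1 : ∑ i, V i = ∑ i ∈ S, V i + ∑ i ∈ Sc, V i :=
        (Finset.sum_filter_add_sum_filter_not Finset.univ (fun i => z < e i) V).symm
      have h2 : ∑ i ∈ S, V i = ∑ i ∈ S, e i := by
        apply Finset.sum_congr rfl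
        intro i hi
        have hzi : z < e i := by
          rw [hSdef] at hi
          exact (Finset.mem_filter.mp hi).2
        have : V i = max (e i) z := rfl
        rw [this, max_eq_left hzi.le]
      have h3 : ∑ i ∈ Sc, V i = (nR - k) * z := by
        have h4 : ∀ i ∈ Sc, V i = z := by
          intro i hi
          have hzi : ¬ z < e i := by
            rw [hScdef] at hi
            exact (Finset.mem_filter.mp hi).2
          have : V i = max (e i) z := rfl
          rw [this, max_eq_right (not_lt.mp hzi)]
        rw [Finset.sum_congr rfl h4, Finset.sum_const, nsmul_eq_mul, hScR]
      rw [h1, h2, h3] at hPV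
      exact hPV
    have hPe : ∑ i, e i = P - nR * d := by
      have : ∑ i, e i = ∑ i, L i - (Fintype.card M : ℝ) * d := by
        rw [Finset.sum_sub_distrib, Finset.sum_const, nsmul_eq_mul, Finset.card_univ]
      rw [this, hPL, hnRdef]
    have hsplitE : ∑ i, e i = ∑ i ∈ S, e i + ∑ i ∈ Sc, e i :=
      (Finset.sum_filter_add_sum_filter_not Finset.univ (fun i => z < e i) e).symm
    have hnkK : (nR - k - K) * z = nR * d := by
      have h1 : ∑ i ∈ S, e i + K * z = P - nR * d := by
        rw [← hKz, ← hsplitE, hPe]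
      linear_combination hEz - h1
    have hn1 : (1:ℝ) ≤ nR := by
      rw [hnRdef]
      exact_mod_cast Fintype.card_pos (α := M)
    have hnR0 : (0:ℝ) < nR := lt_of_lt_of_le zero_lt_one hn1
    have hnkK0 : 0 < nR - k - K := by
      by_contra h
      push_neg at h
      have h1 : (nR - k - K) * z ≤ 0 := mul_nonpos_of_nonpos_of_nonneg h hz0.le
      have h2 : 0 < nR * d := mul_pos hnR0 hdpos
      linarith [hnkK]
    by_cases hkK : (k:ℝ) + K = 0
    · -- all loads equal
      have hkz : k = 0 := by
        have hk0 : (0:ℝ) ≤ (k:ℝ) := Nat.cast_nonneg k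
        have : (k:ℝ) = 0 := by linarith
        exact_mod_cast this
      have hKzero : K = 0 := by
        have hk0 : (0:ℝ) ≤ (k:ℝ) := Nat.cast_nonneg k
        linarith
      have hSe : S = ∅ := Finset.card_eq_zero.mp hkz
      have hScall : Sc = Finset.univ := by
        rw [hScdef]
        apply Finset.filter_true_of_mem
        intro i _
        intro hc
        have : i ∈ S := by
          rw [hSdef]
          exact Finset.mem_filter.mpr ⟨Finset.mem_univ _, hc⟩
        rw [hSe] at this
        exact absurd this (Finset.notMem_empty i)
      have heall : ∀ i, e i = 0 := by
        have hsum0 : ∑ i ∈ Sc, e i = 0 := by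
          rw [hKz, hKzero, zero_mul]
        intro i
        have := (Finset.sum_eq_zero_iff_of_nonneg (fun i _ => he0 i)).mp hsum0 i
          (by rw [hScall]; exact Finset.mem_univ i)
        exact this
      have hzdeq : z = d := by
        have : (nR - 0 - 0) * z = nR * d := by
          rw [← hnkK]
          norm_num [hkz, hKzero]
        have h2 : nR * z = nR * d := by
          rw [← this]; ring
        exact mul_left_cancel₀ (ne_of_gt hnR0) h2
      have hLV : ∀ i, θ (L i) = θ (V i) := by
        intro i
        have h1 : L i = d := by rw [hLe i, heall i, add_zero]
        have h2 : V i = max (e i) z := rfl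
        rw [h1, h2, heall i, max_eq_right (by linarith), hzdeq]
      calc ∑ i, θ (L i) = ∑ i, θ (V i) := Finset.sum_congr rfl fun i _ => hLV i
        _ ≤ ∑ i, θ (O i) := hVkey
        _ ≤ α * ∑ i, θ (O i) := le_mul_of_one_le_left hθO0 hα
    · -- main case
      have hkK0 : 0 < (k:ℝ) + K :=
        lt_of_le_of_ne (add_nonneg (Nat.cast_nonneg k) hK0) (Ne.symm hkK)
      set t : ℝ := ((k:ℝ) + K) / nR with htdef
      have ht0 : 0 < t := div_pos hkK0 hnR0
      have ht1 : t < 1 := by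
        rw [htdef, div_lt_one hnR0]
        linarith
      have htn : t * nR = (k:ℝ) + K := by
        rw [htdef]
        field_simp
      have hdt : d / (1 - t) = z := by
        have h1t : 1 - t = (nR - k - K) / nR := by
          rw [htdef]
          field_simp
          ring
      -- d / ((nR-k-K)/nR) = d * nR / (nR-k-K) = z
        rw [h1t, div_div_eq_mul_div, div_eq_iff (ne_of_gt hnkK0)]
        linarith [hnkK]
      have hAi : ∀ i ∈ S, t * θ (e i + d) + (1 - t) * θ d ≤
          α * (t * θ (e i) + (1 - t) * θ z) := by
        intro i hi
        have hzi : z < e i := by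
          rw [hSdef] at hi
          exact (Finset.mem_filter.mp hi).2
        have hr : d / (1 - t) ≤ e i := by rw [hdt]; exact hzi.le
        have h := hαineq t ⟨ht0, ht1⟩ d hd0 (e i) hr
        rwa [hdt] at h
      have hAz : t * θ (z + d) + (1 - t) * θ d ≤ α * (t * θ z + (1 - t) * θ z) := by
        have h := hαineq t ⟨ht0, ht1⟩ d hd0 z (by rw [hdt])
        rwa [hdt] at h
      set A1 : ℝ := ∑ i ∈ S, θ (e i + d) with hA1def
      set A4 : ℝ := ∑ i ∈ S, θ (e i) with hA4def
      have hsumS : t * A1 + (k:ℝ) * ((1 - t) * θ d) ≤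
          α * (t * A4 + (k:ℝ) * ((1 - t) * θ z)) := by
        have h := Finset.sum_le_sum hAi
        have lhs_eq : ∑ i ∈ S, (t * θ (e i + d) + (1 - t) * θ d) =
            t * A1 + (k:ℝ) * ((1 - t) * θ d) := by
          rw [Finset.sum_add_distrib, ← Finset.mul_sum, Finset.sum_const, nsmul_eq_mul]
        have rhs_eq : ∑ i ∈ S, α * (t * θ (e i) + (1 - t) * θ z) =
            α * (t * A4 + (k:ℝ) * ((1 - t) * θ z)) := by
          rw [← Finset.mul_sum, Finset.sum_add_distrib, ← Finset.mul_sum,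
            Finset.sum_const, nsmul_eq_mul]
        rw [lhs_eq, rhs_eq] at h
        exact h
      have hKAz := mul_le_mul_of_nonneg_left hAz hK0
      have key : t * (A1 + K * θ (z + d) + (nR - k - K) * θ d) ≤
          t * (α * (A4 + (nR - k) * θ z)) := by
        have e1 : t * (A1 + K * θ (z + d) + (nR - k - K) * θ d) =
            (t * A1 + (k:ℝ) * ((1 - t) * θ d)) +
              (K * (t * θ (z + d) + (1 - t) * θ d)) := by
          linear_combination (θ d) * htn
        have e2 : t * (α * (A4 + (nR - k) * θ z)) =
            (α * (t * A4 + (k:ℝ) * ((1 - t) * θ z))) +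
              (K * (α * (t * θ z + (1 - t) * θ z))) := by
          linear_combination (α * θ z) * htn
        rw [e1, e2]
        exact add_le_add hsumS hKAz
      have target2 : A1 + K * θ (z + d) + (nR - k - K) * θ d ≤
          α * (A4 + (nR - k) * θ z) :=
        le_of_mul_le_mul_left key ht0
      -- step 1 : bound the EF1 objective by the two-point configuration
      have hstep1 : ∑ i, θ (L i) ≤ A1 + K * θ (z + d) + (nR - k - K) * θ d := by
        have hsplitθ : ∑ i, θ (L i) = ∑ i ∈ S, θ (L i) + ∑ i ∈ Sc, θ (L i) :=
          (Finset.sum_filter_add_sum_filter_not Finset.univ (fun i => z < e i)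
            (fun i => θ (L i))).symm
        have hA1' : ∑ i ∈ S, θ (L i) = A1 := by
          apply Finset.sum_congr rfl
          intro i _
          rw [hLe i, add_comm]
        have hcompl : ∑ i ∈ Sc, θ (L i) ≤ K * θ (z + d) + (nR - k - K) * θ d := by
          have hterm : ∀ i ∈ Sc, θ (L i) ≤
              (e i / z) * θ (z + d) + (1 - e i / z) * θ d := by
            intro i hi
            have hez : e i ≤ z := by
              rw [hScdef] at hi
              exact not_lt.mp (Finset.mem_filter.mp hi).2
            have hez1 : e i / z ≤ 1 := by
              rw [div_le_one hz0]
              exact hez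
            have hcvx := hconv.2 (Set.mem_Ici.mpr (by linarith : (0:ℝ) ≤ z + d))
              (Set.mem_Ici.mpr hd0) (div_nonneg (he0 i) hz0.le)
              (by linarith : (0:ℝ) ≤ 1 - e i / z) (by ring)
            have hpt : (e i / z) • (z + d) + (1 - e i / z) • d = e i + d := by
              rw [smul_eq_mul, smul_eq_mul]
              field_simp
              ring
            rw [hpt] at hcvx
            rw [hLe i, add_comm]
            simpa using hcvx
          calc ∑ i ∈ Sc, θ (L i)
              ≤ ∑ i ∈ Sc, ((e i / z) * θ (z + d) + (1 - e i / z) * θ d) :=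
                Finset.sum_le_sum hterm
            _ = K * θ (z + d) + (nR - k - K) * θ d := by
                rw [Finset.sum_add_distrib]
                congr 1
                · rw [← Finset.sum_mul, ← Finset.sum_div, ← hKdef]
                · rw [← Finset.sum_mul]
                  congr 1
                  rw [Finset.sum_sub_distrib, Finset.sum_const, nsmul_eq_mul, mul_one,
                    ← Finset.sum_div, ← hKdef, hScR]
        linarith [hsplitθ, hA1', hcompl]
      have hstep3 : A4 + (nR - k) * θ z = ∑ i, θ (V i) := by
        have hsplitθ : ∑ i, θ (V i) = ∑ i ∈ S, θ (V i) + ∑ i ∈ Sc, θ (V i) :=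
          (Finset.sum_filter_add_sum_filter_not Finset.univ (fun i => z < e i)
            (fun i => θ (V i))).symm
        have h1 : ∑ i ∈ S, θ (V i) = A4 := by
          apply Finset.sum_congr rfl
          intro i hi
          have hzi : z < e i := by
            rw [hSdef] at hi
            exact (Finset.mem_filter.mp hi).2
          have : V i = max (e i) z := rfl
          rw [this, max_eq_left hzi.le]
        have h2 : ∑ i ∈ Sc, θ (V i) = (nR - k) * θ z := by
          have h4 : ∀ i ∈ Sc, θ (V i) = θ z := by
            intro i hi
            have hzi : ¬ z < e i := by
              rw [hScdef] at hi
              exact (Finset.mem_filter.mp hi).2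
            have : V i = max (e i) z := rfl
            rw [this, max_eq_right (not_lt.mp hzi)]
          rw [Finset.sum_congr rfl h4, Finset.sum_const, nsmul_eq_mul, hScR]
        rw [hsplitθ, h1, h2]
      calc ∑ i, θ (L i) ≤ A1 + K * θ (z + d) + (nR - k - K) * θ d := hstep1
        _ ≤ α * (A4 + (nR - k) * θ z) := target2
        _ = α * ∑ i, θ (V i) := by rw [hstep3]
        _ ≤ α * ∑ i, θ (O i) := mul_le_mul_of_nonneg_left hVkey hα0
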